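/- Let 𝒦 be the set of n×l binary matrices whose columns form a chain under inclusion. Then in the polynomial ring in variables x_1,...,x_n, y_1,...,y_l, the sum over M ∈ 𝒦 of ∏_{i,j} (x_i y_j)^{M_{i,j}} equals the sum over partitions λ contained in the n×l rectangle of m_λ(x_1,...,x_n) · m_{λᵀ}(y_1,...,y_l), where m_μ denotes the monomial symmetric polynomial and λᵀ the conjugate partition. -/

import Mathlib

open MvPolynomial

/-- The monomial symmetric polynomial in `k` variables attached to a finitely
supported exponent vector `μ : Fin k → ℕ`: the sum of all *distinct* monomials
obtained by permuting the exponents of `∏ x_i ^ μ i`. -/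
noncomputable def mSym (k : ℕ) (μ : Fin k → ℕ) : MvPolynomial (Fin k) ℤ :=
  ∑ α ∈ (Finset.univ : Finset (Equiv.Perm (Fin k))).image (fun σ => fun i => μ (σ i)),
    ∏ i : Fin k, X i ^ α i

/-- The conjugate (transpose) partition of `lam`, with parts bounded by `n`:
its `j`-th part is the number of `i` with `lam i > j`. -/
def conjPart {n : ℕ} (l : ℕ) (lam : Fin n → ℕ) : Fin l → ℕ :=
  fun j => (Finset.univ.filter (fun i : Fin n => (j : ℕ) < lam i)).card

open Finset
-- test basic helper lemmas
variable {k : ℕ}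

lemma card_filter_comp_perm (p : ℕ → Prop) [DecidablePred p] (f : Fin k → ℕ)
    (σ : Equiv.Perm (Fin k)) :
    ((univ : Finset (Fin k)).filter fun j => p (f (σ j))).card
      = (univ.filter fun j => p (f j)).card := by
  apply Finset.card_nbij' (i := fun j => σ j) (j := fun j => σ.symm j) <;> intro a ha <;> simp_all

lemma card_filter_val_lt (c : ℕ) (hc : c ≤ k) :
    ((univ : Finset (Fin k)).filter fun v : Fin k => (v : ℕ) < c).card = c := by
  have h : (univ.filter fun v : Fin k => (v : ℕ) < c)
      = (Finset.range c).attachFin (fun m hm => lt_of_lt_of_le (Finset.mem_range.mp hm) hc) := by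
    ext v
    simp [Finset.mem_attachFin]
  rw [h, Finset.card_attachFin, Finset.card_range]

lemma antitone_ge_iff {f : Fin k → ℕ} (hf : Antitone f) (t : ℕ) (j : Fin k) :
    t ≤ f j ↔ (j : ℕ) < ((univ : Finset (Fin k)).filter fun j' => t ≤ f j').card := by
  constructor
  · intro h
    have hsub : Finset.Iic j ⊆ univ.filter fun j' => t ≤ f j' := by
      intro x hx
      simp only [mem_filter, mem_univ, true_and]
      exact h.trans (hf (mem_Iic.mp hx))
    have hc := Finset.card_le_card hsub
    rw [Fin.card_Iic] at hc
    omega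
  · intro h
    by_contra hc
    push_neg at hc
    have hsub : (univ.filter fun j' => t ≤ f j') ⊆ Finset.Iio j := by
      intro x hx
      simp only [mem_filter, mem_univ, true_and] at hx
      rw [mem_Iio]
      by_contra hx2
      push_neg at hx2
      have := hf hx2
      omega
    have hcc := Finset.card_le_card hsub
    rw [Fin.card_Iio] at hcc
    omega

lemma antitone_ext {f g : Fin k → ℕ} (hf : Antitone f) (hg : Antitone g)
    (h : ∀ t, ((univ : Finset (Fin k)).filter fun j => t ≤ f j).card
      = (univ.filter fun j => t ≤ g j).card) : f = g := by
  funext j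
  have h1 : f j ≤ g j := by
    have h0 := (antitone_ge_iff hf (f j) j).mp le_rfl
    rw [h (f j)] at h0
    exact (antitone_ge_iff hg (f j) j).mpr h0
  have h2 : g j ≤ f j := by
    have h0 := (antitone_ge_iff hg (g j) j).mp le_rfl
    rw [← h (g j)] at h0
    exact (antitone_ge_iff hf (g j) j).mpr h0
  omega

section Chain
variable {n l : ℕ}

def rowsum (M : Fin n × Fin l → Bool) (i : Fin n) : ℕ :=
  ((univ : Finset (Fin l)).filter fun j => M (i, j) = true).card

def colsum (M : Fin n × Fin l → Bool) (j : Fin l) : ℕ :=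
  ((univ : Finset (Fin n)).filter fun i => M (i, j) = true).card

def col (M : Fin n × Fin l → Bool) (j : Fin l) : Finset (Fin n) :=
  (univ : Finset (Fin n)).filter fun i => M (i, j) = true

def IsChain' (M : Fin n × Fin l → Bool) : Prop :=
  ∀ j j' : Fin l,
    (∀ i : Fin n, M (i, j) = true → M (i, j') = true) ∨
    (∀ i : Fin n, M (i, j') = true → M (i, j) = true)

lemma chain_col_subset {M : Fin n × Fin l → Bool} (Hc : IsChain' M) {j j' : Fin l}
    (h : colsum M j ≤ colsum M j') : col M j ⊆ col M j' := by
  rcases Hc j j' with h1 | h1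
  · intro i hi
    simp only [col, mem_filter, mem_univ, true_and] at hi ⊢
    exact h1 i hi
  · have hsub : col M j' ⊆ col M j := by
      intro i hi
      simp only [col, mem_filter, mem_univ, true_and] at hi ⊢
      exact h1 i hi
    have := Finset.eq_of_subset_of_card_le hsub h
    exact this.ge

lemma chain_mem_iff {M : Fin n × Fin l → Bool} (Hc : IsChain' M) (i : Fin n) (j : Fin l) :
    M (i, j) = true ↔
      ((univ : Finset (Fin l)).filter fun j' => colsum M j < colsum M j').card < rowsum M i := by
  constructor
  · intro h
    have hsub : insert j ((univ : Finset (Fin l)).filter fun j' => colsum M j < colsum M j')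
        ⊆ univ.filter fun j' => M (i, j') = true := by
      intro x hx
      rcases Finset.mem_insert.mp hx with rfl | hx
      · simp [h]
      · simp only [mem_filter, mem_univ, true_and] at hx ⊢
        have : i ∈ col M x := chain_col_subset Hc hx.le (by simp [col, h])
        simpa [col] using this
    have hcard := Finset.card_le_card hsub
    rw [Finset.card_insert_of_notMem (by simp)] at hcard
    unfold rowsum
    omega
  · intro h
    by_contra hM
    have hM' : M (i, j) = false := by
      cases hMv : M (i, j)
      · rfl
      · exact absurd hMv hM
    have hsub : ((univ : Finset (Fin l)).filter fun j' => M (i, j') = true)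
        ⊆ (univ.filter fun j' => colsum M j < colsum M j') := by
      intro x hx
      simp only [mem_filter, mem_univ, true_and] at hx ⊢
      rcases Hc j x with h1 | h1
      · have hsub2 : col M j ⊆ col M x := by
          intro i0 hi0
          simp only [col, mem_filter, mem_univ, true_and] at hi0 ⊢
          exact h1 i0 hi0
        have hss : col M j ⊂ col M x := by
          rw [Finset.ssubset_iff_of_subset hsub2]
          exact ⟨i, by simp [col, hx], by simp [col, hM']⟩
        exact Finset.card_lt_card hss
      · have := h1 i hx
        rw [hM'] at this
        exact absurd this (by simp)
    have := Finset.card_le_card hsub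
    unfold rowsum at h
    omega

lemma chain_cnt {M : Fin n × Fin l → Bool} (Hc : IsChain' M) (t : ℕ) :
    ((univ : Finset (Fin l)).filter fun j => t ≤ colsum M j).card
      = ((univ : Finset (Fin l)).filter fun v : Fin l =>
          t ≤ ((univ : Finset (Fin n)).filter fun i => (v : ℕ) < rowsum M i).card).card := by
  rcases Nat.eq_zero_or_pos t with rfl | ht
  · simp
  set c := ((univ : Finset (Fin l)).filter fun j => t ≤ colsum M j).card with hc
  have hcl : c ≤ l := le_trans (Finset.card_filter_le _ _) (by simp)
  have key : ∀ v : Fin l,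
      t ≤ ((univ : Finset (Fin n)).filter fun i => (v : ℕ) < rowsum M i).card ↔ (v : ℕ) < c := by
    intro v
    constructor
    · intro hgv
      by_contra hvc
      push_neg at hvc  -- c ≤ v
      have hT : ((univ : Finset (Fin n)).filter fun i => (v : ℕ) < rowsum M i).Nonempty := by
        rw [← Finset.card_pos]; omega
      obtain ⟨i0, hi0⟩ := hT
      simp only [mem_filter, mem_univ, true_and] at hi0
      have hrs : rowsum M i0 ≤ l := le_trans (Finset.card_filter_le _ _) (by simp)
      have hclt : c < l := by omega
      -- complement of S nonempty
      have hcompl : ((univ : Finset (Fin l)).filter fun j => ¬ t ≤ colsum M j).Nonempty := by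
        rw [← Finset.card_pos]
        have := Finset.card_filter_add_card_filter_not
          (s := (univ : Finset (Fin l))) (p := fun j => t ≤ colsum M j)
        simp only [Finset.card_univ, Fintype.card_fin] at this
        omega
      obtain ⟨js, hjs, hmax⟩ := Finset.exists_max_image _ (colsum M) hcompl
      simp only [mem_filter, mem_univ, true_and] at hjs
      have hsub : ((univ : Finset (Fin n)).filter fun i => (v : ℕ) < rowsum M i) ⊆ col M js := by
        intro i hi
        simp only [mem_filter, mem_univ, true_and] at hi
        have h1 : ¬ ((univ : Finset (Fin l)).filter fun j => M (i, j) = true)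
            ⊆ ((univ : Finset (Fin l)).filter fun j => t ≤ colsum M j) := by
          intro hss
          have := Finset.card_le_card hss
          have : rowsum M i ≤ c := this
          omega
        obtain ⟨j1, hj1M, hj1S⟩ := Finset.not_subset.mp h1
        simp only [mem_filter, mem_univ, true_and] at hj1M hj1S
        have hj1c : colsum M j1 ≤ colsum M js := hmax j1 (by simp only [mem_filter, mem_univ, true_and]; omega)
        exact chain_col_subset Hc hj1c (by simp [col, hj1M])
      have := Finset.card_le_card hsub
      have hcol : (col M js).card = colsum M js := rfl
      omega
    · intro hvc
      have hS : ((univ : Finset (Fin l)).filter fun j => t ≤ colsum M j).Nonempty := by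
        rw [← Finset.card_pos]; omega
      obtain ⟨j0, hj0, hmin⟩ := Finset.exists_min_image _ (colsum M) hS
      simp only [mem_filter, mem_univ, true_and] at hj0
      have hsub : col M j0 ⊆ (univ : Finset (Fin n)).filter fun i => (v : ℕ) < rowsum M i := by
        intro i hi
        simp only [mem_filter, mem_univ, true_and]
        have hsub2 : ((univ : Finset (Fin l)).filter fun j => t ≤ colsum M j)
            ⊆ (univ : Finset (Fin l)).filter fun j => M (i, j) = true := by
          intro j hj
          simp only [mem_filter, mem_univ, true_and] at hj ⊢
          have : i ∈ col M j := chain_col_subset Hc (hmin j (by simp [hj])) hi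
          simpa [col] using this
        have := Finset.card_le_card hsub2
        have : c ≤ rowsum M i := this
        omega
      have h1 := Finset.card_le_card hsub
      have hcol : (col M j0).card = colsum M j0 := rfl
      omega
  rw [Finset.filter_congr (fun v _ => by rw [key v])]
  exact (card_filter_val_lt c hcl).symm

end Chain


section Backward
variable {n l : ℕ}

def gfun (lam : Fin n → ℕ) (v : ℕ) : ℕ :=
  ((univ : Finset (Fin n)).filter fun i => v < lam i).card

lemma gfun_anti (lam : Fin n → ℕ) {v w : ℕ} (h : v ≤ w) : gfun lam w ≤ gfun lam v := by
  apply Finset.card_le_card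
  apply Finset.monotone_filter_right
  intro i hi
  omega

variable (lam : Fin n → ℕ) (σ : Equiv.Perm (Fin n)) (τ : Equiv.Perm (Fin l))

/-- the rank of column j for `β = gfun lam ∘ τ` -/
def rkb (j : Fin l) : ℕ :=
  ((univ : Finset (Fin l)).filter fun j' : Fin l =>
    gfun lam (τ j : ℕ) < gfun lam ((τ j' : Fin l) : ℕ)).card

lemma rkb_eq (j : Fin l) :
    rkb lam τ j = ((univ : Finset (Fin l)).filter fun j' : Fin l =>
      gfun lam (τ j : ℕ) < gfun lam (j' : ℕ)).card := by
  unfold rkb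
  exact card_filter_comp_perm (fun v => gfun lam (τ j : ℕ) < v)
    (fun j' : Fin l => gfun lam (j' : ℕ)) τ

lemma rkb_le (j : Fin l) : rkb lam τ j ≤ (τ j : ℕ) := by
  rw [rkb_eq]
  have hsub : ((univ : Finset (Fin l)).filter fun j' : Fin l =>
      gfun lam (τ j : ℕ) < gfun lam (j' : ℕ)) ⊆ Finset.Iio (τ j) := by
    intro x hx
    simp only [mem_filter, mem_univ, true_and] at hx
    rw [mem_Iio]
    by_contra h3
    push_neg at h3
    have h5 : ((τ j : Fin l) : ℕ) ≤ (x : ℕ) := h3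
    have := gfun_anti lam h5
    omega
  have := Finset.card_le_card hsub
  rwa [Fin.card_Iio] at this

lemma gfun_rkb (j : Fin l) : gfun lam (rkb lam τ j) = gfun lam (τ j : ℕ) := by
  have h2 := rkb_le lam τ j
  have h3 : gfun lam (τ j : ℕ) ≤ gfun lam (rkb lam τ j) := gfun_anti lam h2
  have h4 : gfun lam (rkb lam τ j) ≤ gfun lam (τ j : ℕ) := by
    by_contra h4
    push_neg at h4
    have ht0l : rkb lam τ j < l := lt_of_le_of_lt h2 (τ j).isLt
    have hsub : Finset.Iic (⟨rkb lam τ j, ht0l⟩ : Fin l)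
        ⊆ (univ : Finset (Fin l)).filter fun j' : Fin l =>
            gfun lam (τ j : ℕ) < gfun lam (j' : ℕ) := by
      intro x hx
      simp only [mem_filter, mem_univ, true_and]
      have hx0 : x ≤ (⟨rkb lam τ j, ht0l⟩ : Fin l) := mem_Iic.mp hx
      have hx' : (x : ℕ) ≤ rkb lam τ j := hx0
      have := gfun_anti lam hx'
      omega
    have hcc := Finset.card_le_card hsub
    rw [Fin.card_Iic, ← rkb_eq] at hcc
    simp only [Fin.val_mk] at hcc
    omega
  omega

/-- backward column sums -/
lemma backward_colsum (j : Fin l) :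
    ((univ : Finset (Fin n)).filter fun i => rkb lam τ j < lam (σ i)).card
      = gfun lam (τ j : ℕ) := by
  have h1 := card_filter_comp_perm (fun v => rkb lam τ j < v) lam σ
  rw [h1]
  exact gfun_rkb lam τ j

/-- backward row sums -/
lemma backward_rowsum (hbd : ∀ i, lam i ≤ l) (i : Fin n) :
    ((univ : Finset (Fin l)).filter fun j => rkb lam τ j < lam (σ i)).card = lam (σ i) := by
  rcases Nat.eq_zero_or_pos (lam (σ i)) with ha | ha
  · rw [ha]
    simp
  · have hal : lam (σ i) ≤ l := hbd _
    set a := lam (σ i) with haa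
    have hpl : a - 1 < l := by omega
    set p : Fin l := ⟨a - 1, hpl⟩ with hp
    have hpv : (p : ℕ) = a - 1 := rfl
    have key : ∀ j : Fin l, rkb lam τ j < a ↔ gfun lam (a - 1) ≤ gfun lam (τ j : ℕ) := by
      intro j
      constructor
      · intro h
        by_contra hcl
        push_neg at hcl
        have hsub : Finset.Iic p ⊆ (univ : Finset (Fin l)).filter fun j' : Fin l =>
            gfun lam (τ j : ℕ) < gfun lam (j' : ℕ) := by
          intro x hx
          simp only [mem_filter, mem_univ, true_and]
          have hx0 : x ≤ p := mem_Iic.mp hx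
          have hx' : (x : ℕ) ≤ a - 1 := hx0
          have := gfun_anti lam hx'
          omega
        have hcc := Finset.card_le_card hsub
        rw [Fin.card_Iic, ← rkb_eq, hpv] at hcc
        omega
      · intro h
        rw [rkb_eq]
        have hsub : ((univ : Finset (Fin l)).filter fun j' : Fin l =>
            gfun lam (τ j : ℕ) < gfun lam (j' : ℕ)) ⊆ Finset.Iio p := by
          intro x hx
          simp only [mem_filter, mem_univ, true_and] at hx
          rw [mem_Iio]
          by_contra h3
          push_neg at h3
          have h5 : (p : ℕ) ≤ (x : ℕ) := h3
          rw [hpv] at h5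
          have := gfun_anti lam h5
          omega
        have hcc := Finset.card_le_card hsub
        rw [Fin.card_Iio, hpv] at hcc
        omega
    rw [Finset.filter_congr (fun j _ => by rw [key j])]
    have h2 := card_filter_comp_perm (fun v => gfun lam (a-1) ≤ v)
      (fun j' : Fin l => gfun lam (j' : ℕ)) τ
    rw [h2]
    have hset : ((univ : Finset (Fin l)).filter fun j' : Fin l =>
        gfun lam (a - 1) ≤ gfun lam (j' : ℕ)) = Finset.Iic p := by
      ext x
      simp only [mem_filter, mem_univ, true_and, mem_Iic]
      constructor
      · intro hx
        by_contra h3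
        push_neg at h3
        have hax : a ≤ (x : ℕ) := by
          have h4 : (p : ℕ) < (x : ℕ) := h3
          rw [hpv] at h4
          omega
        have h5 : gfun lam (x : ℕ) ≤ gfun lam a := gfun_anti lam hax
        have h6 : gfun lam a < gfun lam (a - 1) := by
          apply Finset.card_lt_card
          have hsub6 : ((univ : Finset (Fin n)).filter fun i0 => a < lam i0)
              ⊆ (univ.filter fun i0 => a - 1 < lam i0) :=
            Finset.monotone_filter_right _ (fun i0 hi0 => by omega)
          rw [Finset.ssubset_iff_of_subset hsub6]
          exact ⟨σ i, by simp only [mem_filter, mem_univ, true_and]; omega,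
            by simp only [mem_filter, mem_univ, true_and]; omega⟩
        omega
      · intro hx
        have hx' : (x : ℕ) ≤ a - 1 := by
          have h4 : (x : ℕ) ≤ (p : ℕ) := hx
          rwa [hpv] at h4
        exact gfun_anti lam hx'
    rw [hset, Fin.card_Iic, hpv]
    omega

end Backward

section Forward
variable {n l : ℕ}

def rowsumF (M : Fin n × Fin l → Bool) : Fin n → Fin (l + 1) :=
  fun i => ⟨rowsum M i, by
    have h := Finset.card_filter_le (univ : Finset (Fin l)) (fun j => M (i, j) = true)
    simp only [Finset.card_univ, Fintype.card_fin] at h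
    exact Nat.lt_succ_of_le h⟩

def esort (M : Fin n × Fin l → Bool) : Equiv.Perm (Fin n) :=
  Fin.revPerm.trans (Tuple.sort (rowsumF M))

def lamF (M : Fin n × Fin l → Bool) : Fin n → Fin (l + 1) :=
  fun k => rowsumF M (esort M k)

lemma lamF_antitone (M : Fin n × Fin l → Bool) :
    Antitone fun k => ((lamF M k : ℕ)) := by
  intro a b hab
  have hm := Tuple.monotone_sort (rowsumF M)
  have h1 : Fin.rev b ≤ Fin.rev a := Fin.rev_le_rev.mpr hab
  exact hm h1

def colsumF (M : Fin n × Fin l → Bool) : Fin l → Fin (n + 1) :=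
  fun j => ⟨colsum M j, by
    have h := Finset.card_filter_le (univ : Finset (Fin n)) (fun i => M (i, j) = true)
    simp only [Finset.card_univ, Fintype.card_fin] at h
    exact Nat.lt_succ_of_le h⟩

def csort (M : Fin n × Fin l → Bool) : Equiv.Perm (Fin l) :=
  Fin.revPerm.trans (Tuple.sort (colsumF M))

lemma csort_antitone (M : Fin n × Fin l → Bool) :
    Antitone fun j => colsum M (csort M j) := by
  intro a b hab
  have hm := Tuple.monotone_sort (colsumF M)
  have h1 : Fin.rev b ≤ Fin.rev a := Fin.rev_le_rev.mpr hab
  exact hm h1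

lemma conjPart_antitone (lam : Fin n → ℕ) : Antitone (conjPart l lam) := by
  intro a b hab
  have hab' : (a : ℕ) ≤ (b : ℕ) := hab
  apply Finset.card_le_card
  apply Finset.monotone_filter_right
  intro i hi
  omega

lemma conj_lamF (M : Fin n × Fin l → Bool) (v : Fin l) :
    conjPart l (fun k => ((lamF M k : ℕ))) v
      = ((univ : Finset (Fin n)).filter fun i => (v : ℕ) < rowsum M i).card :=
  card_filter_comp_perm (fun w => (v : ℕ) < w) (fun i => rowsum M i) (esort M)

lemma colsum_sorted (M : Fin n × Fin l → Bool) (Hc : IsChain' M) :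
    (fun v : Fin l => conjPart l (fun k => ((lamF M k : ℕ))) v)
      = fun j => colsum M (csort M j) := by
  apply antitone_ext (fun a b hab => conjPart_antitone _ hab) (csort_antitone M)
  intro t
  have h1 := card_filter_comp_perm (fun w => t ≤ w) (colsum M) (csort M)
  rw [h1]
  rw [Finset.filter_congr (fun v _ => by rw [conj_lamF M v])]
  exact (chain_cnt Hc t).symm

end Forward

/-- **Generating function of bikeys.**
Summing the monomials `∏_{i,j} (x_i y_j)^{M_{i,j}}` over all `n × l` binary matrices
whose columns form a chain under inclusion yields
`∑_λ m_λ(x) · m_{λᵀ}(y)`, the sum being over partitions `λ` contained in the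
`n × l` rectangle. -/
theorem chain_matrices_generating_function (n l : ℕ) :
    ∑ M ∈ (Finset.univ : Finset (Fin n × Fin l → Bool)).filter
        (fun M => ∀ j j' : Fin l,
          (∀ i : Fin n, M (i, j) = true → M (i, j') = true) ∨
          (∀ i : Fin n, M (i, j') = true → M (i, j) = true)),
      ∏ i : Fin n, ∏ j : Fin l,
        (X (Sum.inl i) * X (Sum.inr j) : MvPolynomial (Fin n ⊕ Fin l) ℤ) ^
          (if M (i, j) then 1 else 0) =
    ∑ lam ∈ (Finset.univ : Finset (Fin n → Fin (l + 1))).filter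
        (fun lam => ∀ i i' : Fin n, i ≤ i' → (lam i' : ℕ) ≤ (lam i : ℕ)),
      rename Sum.inl (mSym n (fun i => (lam i : ℕ))) *
        rename Sum.inr (mSym l (conjPart l (fun i => (lam i : ℕ)))) := by
  classical
  have hL : ∀ M : Fin n × Fin l → Bool,
      (∏ i : Fin n, ∏ j : Fin l,
        (X (Sum.inl i) * X (Sum.inr j) : MvPolynomial (Fin n ⊕ Fin l) ℤ) ^
          (if M (i, j) then 1 else 0))
      = (∏ i : Fin n, (X (Sum.inl i) : MvPolynomial (Fin n ⊕ Fin l) ℤ) ^ rowsum M i) *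
          ∏ j : Fin l, (X (Sum.inr j) : MvPolynomial (Fin n ⊕ Fin l) ℤ) ^ colsum M j := by
    intro M
    simp only [mul_pow]
    rw [Finset.prod_congr rfl fun (i : Fin n) _ => Finset.prod_mul_distrib,
      Finset.prod_mul_distrib]
    congr 1
    · refine Finset.prod_congr rfl fun i _ => ?_
      rw [Finset.prod_pow_eq_pow_sum]
      congr 1
      rw [rowsum, Finset.card_filter]
    · rw [Finset.prod_comm]
      refine Finset.prod_congr rfl fun j _ => ?_
      rw [Finset.prod_pow_eq_pow_sum]
      congr 1
      rw [colsum, Finset.card_filter]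
  have hR : ∀ lam : Fin n → Fin (l + 1),
      rename Sum.inl (mSym n fun i => ((lam i : ℕ))) *
        rename Sum.inr (mSym l (conjPart l fun i => ((lam i : ℕ))))
      = ∑ p ∈ (((univ : Finset (Equiv.Perm (Fin n))).image
            fun σ => fun i => ((lam (σ i) : ℕ))) ×ˢ
          ((univ : Finset (Equiv.Perm (Fin l))).image fun τ => fun j =>
            conjPart l (fun i => ((lam i : ℕ))) (τ j))),
          (∏ i : Fin n, (X (Sum.inl i) : MvPolynomial (Fin n ⊕ Fin l) ℤ) ^ p.1 i) *
            ∏ j : Fin l, (X (Sum.inr j) : MvPolynomial (Fin n ⊕ Fin l) ℤ) ^ p.2 j := by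
    intro lam
    rw [Finset.sum_product, mSym, mSym, map_sum, map_sum, Finset.sum_mul_sum]
    refine Finset.sum_congr rfl fun α hα => Finset.sum_congr rfl fun β hβ => ?_
    rw [map_prod, map_prod]
    congr 1
    · exact Finset.prod_congr rfl fun i _ => by rw [map_pow, rename_X]
    · exact Finset.prod_congr rfl fun j _ => by rw [map_pow, rename_X]
  rw [Finset.sum_congr rfl fun M _ => hL M, Finset.sum_congr rfl fun lam _ => hR lam,
    Finset.sum_sigma']
  refine Finset.sum_nbij'
    (fun M => ⟨lamF M, (fun i => rowsum M i, fun j => colsum M j)⟩)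
    (fun x => fun p : Fin n × Fin l =>
      decide (((univ : Finset (Fin l)).filter fun j' => x.2.2 p.2 < x.2.2 j').card < x.2.1 p.1))
    ?_ ?_ ?_ ?_ ?_
  · -- forward membership
    intro M hM
    have Hc : IsChain' M := (Finset.mem_filter.mp hM).2
    refine Finset.mem_sigma.mpr ⟨?_, Finset.mem_product.mpr ⟨?_, ?_⟩⟩
    · exact Finset.mem_filter.mpr ⟨Finset.mem_univ _,
        fun i i' h => lamF_antitone M h⟩
    · refine Finset.mem_image.mpr ⟨(esort M).symm, Finset.mem_univ _, ?_⟩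
      funext i
      show ((rowsumF M (esort M ((esort M).symm i)) : ℕ)) = rowsum M i
      rw [Equiv.apply_symm_apply]
      rfl
    · refine Finset.mem_image.mpr ⟨(csort M).symm, Finset.mem_univ _, ?_⟩
      funext j
      have h1 := congrFun (colsum_sorted M Hc) ((csort M).symm j)
      rw [h1, Equiv.apply_symm_apply]
  · -- backward membership
    rintro ⟨lam, α, β⟩ hx
    refine Finset.mem_filter.mpr ⟨Finset.mem_univ _, ?_⟩
    intro j j'
    rcases le_total (((univ : Finset (Fin l)).filter fun j'' => β j < β j'').card)
      (((univ : Finset (Fin l)).filter fun j'' => β j' < β j'').card) with h | h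
    · right
      intro i hi
      simp only [decide_eq_true_eq] at hi ⊢
      omega
    · left
      intro i hi
      simp only [decide_eq_true_eq] at hi ⊢
      omega
  · -- left inverse
    intro M hM
    have Hc : IsChain' M := (Finset.mem_filter.mp hM).2
    funext p
    obtain ⟨i, j⟩ := p
    show decide (((univ : Finset (Fin l)).filter
      fun j' => colsum M j < colsum M j').card < rowsum M i) = M (i, j)
    cases h : M (i, j) with
    | true => exact decide_eq_true ((chain_mem_iff Hc i j).mp h)
    | false =>
      refine decide_eq_false fun hlt => ?_
      rw [(chain_mem_iff Hc i j).mpr hlt] at h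
      cases h
  · -- right inverse
    rintro ⟨lam, α, β⟩ hx
    rw [Finset.mem_sigma] at hx
    obtain ⟨hlam, hαβ⟩ := hx
    obtain ⟨hα, hβ⟩ := Finset.mem_product.mp hαβ
    obtain ⟨σ, -, hσ⟩ := Finset.mem_image.mp hα
    obtain ⟨τ, -, hτ⟩ := Finset.mem_image.mp hβ
    dsimp only at hσ hτ hlam ⊢
    have hanti : Antitone (fun i => ((lam i : ℕ))) :=
      fun a b hab => (Finset.mem_filter.mp hlam).2 a b hab
    have hbd : ∀ i, ((lam i : ℕ)) ≤ l := fun i => Fin.is_le _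
    subst hσ hτ
    set M : Fin n × Fin l → Bool := fun p : Fin n × Fin l =>
      decide (((univ : Finset (Fin l)).filter fun j' =>
        conjPart l (fun i => ((lam i : ℕ))) (τ p.2)
          < conjPart l (fun i => ((lam i : ℕ))) (τ j')).card < ((lam (σ p.1) : ℕ))) with hM
    have h2 : (fun i => rowsum M i) = fun i => ((lam (σ i) : ℕ)) := by
      funext i
      have hpred : ∀ j, (M (i, j) = true) ↔ (rkb (fun i => ((lam i : ℕ))) τ j < ((lam (σ i) : ℕ))) := by
        intro j
        rw [hM]
        simp only [decide_eq_true_eq]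
        exact Iff.rfl
      show ((univ : Finset (Fin l)).filter fun j => M (i, j) = true).card = ((lam (σ i) : ℕ))
      rw [Finset.filter_congr (fun j _ => hpred j)]
      exact backward_rowsum (fun i => ((lam i : ℕ))) σ τ hbd i
    have h3 : (fun j => colsum M j)
        = fun j => conjPart l (fun i => ((lam i : ℕ))) (τ j) := by
      funext j
      have hpred : ∀ i, (M (i, j) = true) ↔ (rkb (fun i => ((lam i : ℕ))) τ j < ((lam (σ i) : ℕ))) := by
        intro i
        rw [hM]
        simp only [decide_eq_true_eq]
        exact Iff.rfl
      show ((univ : Finset (Fin n)).filter fun i => M (i, j) = true).card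
        = conjPart l (fun i => ((lam i : ℕ))) (τ j)
      rw [Finset.filter_congr (fun i _ => hpred i)]
      exact backward_colsum (fun i => ((lam i : ℕ))) σ τ j
    have h1 : lamF M = lam := by
      have hval : (fun k => ((lamF M k : ℕ))) = fun k => ((lam k : ℕ)) := by
        apply antitone_ext (lamF_antitone M) hanti
        intro t
        have e1 := card_filter_comp_perm (fun w => t ≤ w) (fun i => rowsum M i) (esort M)
        have e2 := card_filter_comp_perm (fun w => t ≤ w) (fun i => ((lam i : ℕ))) σ
        calc ((univ : Finset (Fin n)).filter fun k => t ≤ ((lamF M k : ℕ))).card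
            = ((univ : Finset (Fin n)).filter fun i => t ≤ rowsum M i).card := e1
          _ = ((univ : Finset (Fin n)).filter fun i => t ≤ ((lam (σ i) : ℕ))).card := by
              rw [Finset.filter_congr (fun i _ => by rw [congrFun h2 i])]
          _ = ((univ : Finset (Fin n)).filter fun i => t ≤ ((lam i : ℕ))).card := e2
      funext k
      exact Fin.val_injective (congrFun hval k)
    refine Sigma.ext h1 (heq_of_eq ?_)
    exact Prod.ext h2 h3
  · -- summand equality
    intro M hM
    rfl
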